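/- Let n ≥ 1 and let u : ℝⁿ → ℝ be three times continuously differentiable with compact support. Then the squared L² norm of the full Hessian equals the squared L² norm of the Laplacian: ∑_{i=1}^n ∑_{j=1}^n ∫_{ℝⁿ} (∂ᵢ∂ⱼ u)² dx = ∫_{ℝⁿ} (∑_{i=1}^n ∂ᵢ∂ᵢ u)² dx. -/

import Mathlib

/-- Partial derivative of `f : ℝⁿ → ℝ` in the `i`-th coordinate direction. -/
noncomputable def pderiv' (n : ℕ) (i : Fin n) (f : EuclideanSpace ℝ (Fin n) → ℝ)
    (x : EuclideanSpace ℝ (Fin n)) : ℝ :=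
  fderiv ℝ f x (EuclideanSpace.single i 1)

open MeasureTheory

namespace HessianAux

variable {n : ℕ}

lemma pderiv'_contDiff {m : WithTop ℕ∞} {f : EuclideanSpace ℝ (Fin n) → ℝ} (i : Fin n)
    (hf : ContDiff ℝ (m + 1) f) : ContDiff ℝ m (pderiv' n i f) := by
  have h := hf.fderiv_right (m := m) le_rfl
  exact (ContinuousLinearMap.apply ℝ ℝ (EuclideanSpace.single i 1)).contDiff.comp h

lemma pderiv'_hcs {f : EuclideanSpace ℝ (Fin n) → ℝ} (i : Fin n)
    (hf : HasCompactSupport f) : HasCompactSupport (pderiv' n i f) := by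
  have h := hf.fderiv (𝕜 := ℝ)
  exact h.comp_left (g := fun L : EuclideanSpace ℝ (Fin n) →L[ℝ] ℝ =>
    L (EuclideanSpace.single i 1)) rfl

lemma pderiv'_pderiv' {f : EuclideanSpace ℝ (Fin n) → ℝ} (hf : ContDiff ℝ 2 f)
    (i j : Fin n) (x : EuclideanSpace ℝ (Fin n)) :
    pderiv' n i (pderiv' n j f) x =
      fderiv ℝ (fderiv ℝ f) x (EuclideanSpace.single i 1) (EuclideanSpace.single j 1) := by
  have hdx : DifferentiableAt ℝ (fderiv ℝ f) x :=
    (hf.fderiv_right (m := 1) le_rfl).differentiable one_ne_zero x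
  show fderiv ℝ (fun y => fderiv ℝ f y (EuclideanSpace.single j 1)) x _ = _
  rw [fderiv_clm_apply hdx (differentiableAt_const _)]
  simp

lemma pderiv'_comm {f : EuclideanSpace ℝ (Fin n) → ℝ} (hf : ContDiff ℝ 2 f) (i j : Fin n) :
    pderiv' n i (pderiv' n j f) = pderiv' n j (pderiv' n i f) := by
  funext x
  rw [pderiv'_pderiv' hf, pderiv'_pderiv' hf]
  exact hf.contDiffAt.isSymmSndFDerivAt (by norm_num) _ _

lemma ibp {f g : EuclideanSpace ℝ (Fin n) → ℝ} (hf : ContDiff ℝ 1 f) (hg : ContDiff ℝ 1 g)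
    (hsf : HasCompactSupport f) (hsg : HasCompactSupport g) (i : Fin n) :
    ∫ x, f x * pderiv' n i g x = - ∫ x, pderiv' n i f x * g x := by
  have h1 : Continuous (pderiv' n i f) := (pderiv'_contDiff (m := 0) i (hf.of_le (by norm_num))).continuous
  have h2 : Continuous (pderiv' n i g) := (pderiv'_contDiff (m := 0) i (hg.of_le (by norm_num))).continuous
  exact integral_mul_fderiv_eq_neg_fderiv_mul_of_integrable
    ((h1.mul hg.continuous).integrable_of_hasCompactSupport ((pderiv'_hcs i hsf).mul_right))
    ((hf.continuous.mul h2).integrable_of_hasCompactSupport (hsf.mul_right))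
    ((hf.continuous.mul hg.continuous).integrable_of_hasCompactSupport (hsf.mul_right))
    (fun x _ => hf.differentiable one_ne_zero x) (fun x _ => hg.differentiable one_ne_zero x)

end HessianAux

theorem hessian_L2_eq_laplacian_L2 (n : ℕ) (hn : 1 ≤ n)
    (u : EuclideanSpace ℝ (Fin n) → ℝ) (hu : ContDiff ℝ 3 u)
    (hsupp : HasCompactSupport u) :
    ∑ i : Fin n, ∑ j : Fin n,
        ∫ x : EuclideanSpace ℝ (Fin n), (pderiv' n i (pderiv' n j u) x) ^ 2 =
      ∫ x : EuclideanSpace ℝ (Fin n), (∑ i : Fin n, pderiv' n i (pderiv' n i u) x) ^ 2 := by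
  open HessianAux in
  have hu2 : ContDiff ℝ 2 u := hu.of_le (by norm_num)
  have hP1 : ∀ i : Fin n, ContDiff ℝ 2 (pderiv' n i u) := fun i =>
    pderiv'_contDiff (m := 2) i (hu.of_le (by norm_num))
  have hP2 : ∀ i j : Fin n, ContDiff ℝ 1 (pderiv' n i (pderiv' n j u)) := fun i j =>
    pderiv'_contDiff (m := 1) i ((hP1 j).of_le (by norm_num))
  have hS1 : ∀ i : Fin n, HasCompactSupport (pderiv' n i u) := fun i => pderiv'_hcs i hsupp
  have hS2 : ∀ i j : Fin n, HasCompactSupport (pderiv' n i (pderiv' n j u)) := fun i j =>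
    pderiv'_hcs i (hS1 j)
  have key : ∀ i j : Fin n, ∫ x, (pderiv' n i (pderiv' n j u) x) ^ 2
      = ∫ x, pderiv' n i (pderiv' n i u) x * pderiv' n j (pderiv' n j u) x := by
    intro i j
    have h1 : ∫ x, pderiv' n j (pderiv' n i u) x * pderiv' n i (pderiv' n j u) x
        = - ∫ x, pderiv' n i (pderiv' n j (pderiv' n i u)) x * pderiv' n j u x :=
      ibp (hP2 j i) ((hP1 j).of_le (by norm_num)) (hS2 j i) (hS1 j) i
    have h2 : ∫ x, pderiv' n i (pderiv' n i u) x * pderiv' n j (pderiv' n j u) x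
        = - ∫ x, pderiv' n j (pderiv' n i (pderiv' n i u)) x * pderiv' n j u x :=
      ibp (hP2 i i) ((hP1 j).of_le (by norm_num)) (hS2 i i) (hS1 j) j
    calc ∫ x, (pderiv' n i (pderiv' n j u) x) ^ 2
        = ∫ x, pderiv' n j (pderiv' n i u) x * pderiv' n i (pderiv' n j u) x := by
          simp only [pow_two, pderiv'_comm hu2 i j]
      _ = - ∫ x, pderiv' n i (pderiv' n j (pderiv' n i u)) x * pderiv' n j u x := h1
      _ = - ∫ x, pderiv' n j (pderiv' n i (pderiv' n i u)) x * pderiv' n j u x := by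
          rw [pderiv'_comm (hP1 i) i j]
      _ = ∫ x, pderiv' n i (pderiv' n i u) x * pderiv' n j (pderiv' n j u) x := by
          rw [h2]
  have hint : ∀ i j : Fin n, Integrable
      (fun x => pderiv' n i (pderiv' n i u) x * pderiv' n j (pderiv' n j u) x) :=
    fun i j => ((hP2 i i).continuous.mul (hP2 j j).continuous).integrable_of_hasCompactSupport
      (hS2 i i).mul_right
  calc ∑ i : Fin n, ∑ j : Fin n,
        ∫ x : EuclideanSpace ℝ (Fin n), (pderiv' n i (pderiv' n j u) x) ^ 2
      = ∑ i : Fin n, ∑ j : Fin n,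
        ∫ x, pderiv' n i (pderiv' n i u) x * pderiv' n j (pderiv' n j u) x := by
        exact Finset.sum_congr rfl fun i _ => Finset.sum_congr rfl fun j _ => key i j
    _ = ∑ i : Fin n, ∫ x, ∑ j : Fin n,
        pderiv' n i (pderiv' n i u) x * pderiv' n j (pderiv' n j u) x := by
        exact Finset.sum_congr rfl fun i _ =>
          (integral_finset_sum _ fun j _ => hint i j).symm
    _ = ∫ x, ∑ i : Fin n, ∑ j : Fin n,
        pderiv' n i (pderiv' n i u) x * pderiv' n j (pderiv' n j u) x := by
        exact (integral_finset_sum _ fun i _ => integrable_finset_sum _ fun j _ => hint i j).symm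
    _ = ∫ x : EuclideanSpace ℝ (Fin n), (∑ i : Fin n, pderiv' n i (pderiv' n i u) x) ^ 2 := by
        congr 1; funext x; rw [pow_two, Finset.sum_mul_sum]
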